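/- Let a > 0 and b > 0. There exists a constant C > 0 such that for every m ≥ max{1, ab}, the global maximum point r_m in [0,1) of r ↦ r^m exp(-a/(1-r)^b) satisfies 1 - G·m^{-β} + βG²·m^{-2β} - C·m^{-3β} ≤ r_m ≤ 1 - G·m^{-β} + βG²·m^{-2β} + C·m^{-3β}. -/
import Mathlib
set_option maxHeartbeats 1000000

lemma key_fixedpoint (β ε s : ℝ) (hβ0 : 0 < β) (hβ1 : β < 1) (hε : 0 < ε)
    (hs0 : 0 < s) (hs1 : s < 1) (heq : s = ε * (1 - s) ^ β) :
    ε - β * ε ^ 2 - 4 * ε ^ 3 ≤ s ∧ s ≤ ε - β * ε ^ 2 + 4 * ε ^ 3 := by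
  have h1s : (0:ℝ) < 1 - s := by linarith
  have hle1 : (1 - s) ^ β ≤ 1 := Real.rpow_le_one (by linarith) (by linarith) hβ0.le
  have hsε : s ≤ ε := by
    rw [heq]; nlinarith [Real.rpow_nonneg h1s.le β]
  have hge : 1 - s ≤ (1 - s) ^ β := by
    calc 1 - s = (1 - s) ^ (1:ℝ) := (Real.rpow_one _).symm
    _ ≤ (1 - s) ^ β := Real.rpow_le_rpow_of_exponent_ge h1s (by linarith) hβ1.le
  have hlow0 : ε - ε ^ 2 ≤ s := by
    have h : ε * (1 - s) ≤ s := by nlinarith [heq, mul_le_mul_of_nonneg_left hge hε.le]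
    nlinarith
  by_cases hhalf : ε ≤ 1/2
  · -- small ε case
    have hshalf : s ≤ 1/2 := hsε.trans hhalf
    -- Bernoulli upper: (1-s)^β ≤ 1 - β s
    have hBup : (1 - s) ^ β ≤ 1 - β * s := by
      have := rpow_one_add_le_one_add_mul_self (s := -s) (by linarith) hβ0.le hβ1.le
      have e : (1 : ℝ) + -s = 1 - s := by ring
      rw [e] at this; linarith
    -- Bernoulli upper for exponent 1-β: (1-s)^(1-β) ≤ 1 - (1-β) s
    have hBup2 : (1 - s) ^ (1 - β) ≤ 1 - (1 - β) * s := by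
      have := rpow_one_add_le_one_add_mul_self (s := -s) (p := 1 - β) (by linarith) (by linarith)
        (by linarith)
      have e : (1 : ℝ) + -s = 1 - s := by ring
      rw [e] at this; linarith
    have hprod : (1 - s) ^ β * (1 - s) ^ (1 - β) = 1 - s := by
      rw [← Real.rpow_add h1s]; norm_num
    have hu0 : 0 < (1 - s) ^ (1 - β) := Real.rpow_pos_of_pos h1s _
    have ht0 : 0 < (1 - s) ^ β := Real.rpow_pos_of_pos h1s _
    -- lower: (1-s)^β ≥ (1-s)/(1-(1-β)s)
    have hden : 0 < 1 - (1 - β) * s := by nlinarith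
    have hP : s * (1 - (1 - β) * s) ≥ ε * (1 - s) := by
      have hlowt : (1 - s) / (1 - (1 - β) * s) ≤ (1 - s) ^ β := by
        rw [div_le_iff₀ hden]
        calc 1 - s = (1 - s) ^ β * (1 - s) ^ (1 - β) := hprod.symm
        _ ≤ (1 - s) ^ β * (1 - (1 - β) * s) := by
            exact mul_le_mul_of_nonneg_left hBup2 ht0.le
      have h5 : ε * ((1 - s) / (1 - (1 - β) * s)) ≤ s := by
        calc ε * ((1 - s) / (1 - (1 - β) * s)) ≤ ε * (1 - s) ^ β :=
              mul_le_mul_of_nonneg_left hlowt hε.le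
        _ = s := heq.symm
      rw [← mul_div_assoc] at h5
      linarith [(div_le_iff₀ hden).mp h5]
    -- polynomial manipulation
    constructor
    · nlinarith [hP, sq_nonneg (ε - s), mul_nonneg (mul_nonneg hβ0.le hε.le) hs0.le,
        mul_le_mul (le_refl ε) (by nlinarith : (ε - s) * s ≤ ε ^ 2 * ε) (by nlinarith) hε.le]
    · have hup : s ≤ ε * (1 - β * s) := by
        calc s = ε * (1 - s) ^ β := heq
        _ ≤ ε * (1 - β * s) := mul_le_mul_of_nonneg_left hBup hε.le
      have hA : s * (ε - s) ≤ ε * ε ^ 2 :=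
        mul_le_mul hsε (by linarith) (by linarith) hε.le
      have hB : β * s ^ 2 ≤ β * ε ^ 2 :=
        mul_le_mul_of_nonneg_left (by nlinarith) hβ0.le
      have hlow : ε - β * ε ^ 2 - ε ^ 3 ≤ s := by nlinarith [hP, hA, hB]
      have hBL : β * ε * (ε - β * ε ^ 2 - ε ^ 3) ≤ β * ε * s :=
        mul_le_mul_of_nonneg_left hlow (mul_nonneg hβ0.le hε.le)
      have hq1 : β ^ 2 * ε ^ 3 ≤ ε ^ 3 := by
        nlinarith [mul_nonneg (by nlinarith : (0:ℝ) ≤ 1 - β ^ 2) (pow_nonneg hε.le 3)]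
      have hq2 : β * ε ^ 4 ≤ ε ^ 3 := by
        nlinarith [mul_nonneg (by linarith : (0:ℝ) ≤ 1 - β) (pow_nonneg hε.le 4),
          mul_nonneg (pow_nonneg hε.le 3) (by linarith : (0:ℝ) ≤ 1 - ε)]
      nlinarith [hup, hBL, hq1, hq2]
  · -- large ε case
    push_neg at hhalf
    constructor
    · nlinarith
    · nlinarith

/-- Lemma 4.2. With `β = 1/(1+b)` and `G = (ab)^β`, there is a
constant `C > 0` such that for every `m ≥ max{1, ab}` the global maximum point
`r_m` of `r ↦ r^m exp(-a/(1-r)^b)` (the unique solution in `(0,1)` of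
`m(1-r)^{b+1} = ab r`) satisfies
`1 - G m^{-β} + βG² m^{-2β} - C m^{-3β} ≤ r_m ≤ 1 - G m^{-β} + βG² m^{-2β} + C m^{-3β}`. -/
theorem stmt_10
    (a b : ℝ) (ha : 0 < a) (hb : 0 < b)
    (β G : ℝ) (hβ : β = 1 / (1 + b)) (hG : G = (a * b) ^ β) :
    ∃ C : ℝ, 0 < C ∧ ∀ m : ℝ, max 1 (a * b) ≤ m →
      ∀ r : ℝ, r ∈ Set.Ioo (0:ℝ) 1 → m * (1 - r) ^ (b + 1) = a * b * r →
        1 - G * m ^ (-β) + β * G ^ 2 * m ^ (-(2 * β)) - C * m ^ (-(3 * β)) ≤ r ∧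
        r ≤ 1 - G * m ^ (-β) + β * G ^ 2 * m ^ (-(2 * β)) + C * m ^ (-(3 * β)) := by
  have hb1 : (0:ℝ) < 1 + b := by linarith
  have hβ0 : 0 < β := by rw [hβ]; positivity
  have hβ1 : β < 1 := by rw [hβ, div_lt_one hb1]; linarith
  have hab : 0 < a * b := mul_pos ha hb
  have hG0 : 0 < G := by rw [hG]; positivity
  refine ⟨4 * G ^ 3, by positivity, ?_⟩
  intro m hm r hrIoo heq
  have hm1 : (1:ℝ) ≤ m := le_trans (le_max_left _ _) hm
  have hm0 : (0:ℝ) < m := lt_of_lt_of_le one_pos hm1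
  obtain ⟨hr0, hr1⟩ := hrIoo
  set s := 1 - r with hs
  have hs0 : 0 < s := by rw [hs]; linarith
  have hs1 : s < 1 := by rw [hs]; linarith
  set ε := G * m ^ (-β) with hε
  have hmβ : (0:ℝ) < m ^ (-β) := Real.rpow_pos_of_pos hm0 _
  have hε0 : 0 < ε := mul_pos hG0 hmβ
  have hβsum : (b + 1) * β = 1 := by rw [hβ]; field_simp; ring
  have hrs : r = 1 - s := by rw [hs]; ring
  have heq' : m * s ^ (b + 1) = a * b * (1 - s) := by rw [← hrs]; exact heq
  have h1 : s ^ (b + 1) = a * b / m * (1 - s) := by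
    field_simp
    linear_combination heq'
  have hεval : ε = (a * b / m) ^ β := by
    rw [hε, hG, Real.div_rpow hab.le hm0.le, Real.rpow_neg hm0.le, div_eq_mul_inv]
  have hseq : s = ε * (1 - s) ^ β := by
    have h2 : (s ^ (b + 1)) ^ β = s := by
      rw [← Real.rpow_mul hs0.le, hβsum, Real.rpow_one]
    calc s = (s ^ (b + 1)) ^ β := h2.symm
    _ = (a * b / m * (1 - s)) ^ β := by rw [h1]
    _ = (a * b / m) ^ β * (1 - s) ^ β :=
        Real.mul_rpow (by positivity) (by linarith)
    _ = ε * (1 - s) ^ β := by rw [hεval]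
  obtain ⟨hkl, hku⟩ := key_fixedpoint β ε s hβ0 hβ1 hε0 hs0 hs1 hseq
  have h2pow : m ^ (-(2 * β)) = (m ^ (-β)) ^ 2 := by
    rw [show -(2 * β) = (-β) * 2 by ring, Real.rpow_mul hm0.le,
      show (2:ℝ) = ((2:ℕ):ℝ) by norm_num, Real.rpow_natCast]
  have h3pow : m ^ (-(3 * β)) = (m ^ (-β)) ^ 3 := by
    rw [show -(3 * β) = (-β) * 3 by ring, Real.rpow_mul hm0.le,
      show (3:ℝ) = ((3:ℕ):ℝ) by norm_num, Real.rpow_natCast]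
  have e2 : β * G ^ 2 * m ^ (-(2 * β)) = β * ε ^ 2 := by rw [h2pow, hε]; ring
  have e3 : 4 * G ^ 3 * m ^ (-(3 * β)) = 4 * ε ^ 3 := by rw [h3pow, hε]; ring
  constructor
  · rw [e2, e3, hrs]; linarith
  · rw [e2, e3, hrs]; linarith
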